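/- Let k ∈ ℕ and let σ be a function assigning to each n ∈ ℕ a set σ(n) of functions from I_n to {0,1} with |σ(n)| ≤ 2^{kn}. Then the set B = {x ∈ 2^ω : for all n, h_x(n) ∈ σ(n)} is closed and nowhere dense in 2^ω. -/

import Mathlib

/-- The interval `I_n = [2^n − 1, 2^{n+1} − 1)` of the partition of `ℕ` has exactly
`2^n` elements; we identify the restriction `h_x(n) = x↾I_n` of `x ∈ 2^ω` to `I_n`
with the function `Fin (2^n) → Bool`, `i ↦ x (2^n − 1 + i)`. -/
def hRes (x : ℕ → Bool) (n : ℕ) : Fin (2 ^ n) → Bool :=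
  fun i => x (2 ^ n - 1 + (i : ℕ))

/-- The slalom set `B = {x ∈ 2^ω : ∀ n, h_x(n) ∈ σ(n)}`. -/
def slalomSet (σ : (n : ℕ) → Finset (Fin (2 ^ n) → Bool)) : Set (ℕ → Bool) :=
  { x | ∀ n : ℕ, hRes x n ∈ σ n }

lemma two_mul_le_two_pow : ∀ a : ℕ, 1 ≤ a → 2 * a ≤ 2 ^ a := by
  intro a
  induction a with
  | zero => intro h; omega
  | succ b ih =>
    intro _
    rcases Nat.eq_zero_or_pos b with hb | hb
    · subst hb; norm_num
    · have := ih hb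
      have h2 : (1:ℕ) ≤ 2 ^ b := Nat.one_le_two_pow
      rw [pow_succ]
      omega

/-- If `σ(n)` is a set of at most `2^{kn}` functions `I_n → 2` for each `n`, then
the slalom set `B = {x : ∀ n, h_x(n) ∈ σ(n)}` is closed and nowhere dense in `2^ω`. -/
theorem slalomSet_closed_nowhereDense (k : ℕ)
    (σ : (n : ℕ) → Finset (Fin (2 ^ n) → Bool))
    (hσ : ∀ n : ℕ, (σ n).card ≤ 2 ^ (k * n)) :
    IsClosed (slalomSet σ) ∧ IsNowhereDense (slalomSet σ) := by
  have hclosed : IsClosed (slalomSet σ) := by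
    have heq : slalomSet σ = ⋂ n, (fun x => hRes x n) ⁻¹' ((σ n : Set (Fin (2^n) → Bool))) := by
      ext x; simp [slalomSet, Set.mem_iInter]
    rw [heq]
    exact isClosed_iInter fun n =>
      ((σ n : Set (Fin (2^n) → Bool)).toFinite.isClosed).preimage
        (continuous_pi fun i => continuous_apply _)
  have hint : interior (slalomSet σ) = ∅ := by
    rw [Set.eq_empty_iff_forall_notMem]
    intro x hx
    obtain ⟨I, u, hu, hsub⟩ := isOpen_pi_iff.1 isOpen_interior x hx
    set N : ℕ := I.sup id + 1 with hN
    set n : ℕ := 2 ^ (k + N + 1) with hn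
    -- basic inequalities
    have hkn : k * n < 2 ^ n := by
      have h1 : k * n < 2 ^ (k + N + 1) * n := by
        have : k < 2 ^ (k + N + 1) := lt_of_le_of_lt (by omega) (Nat.lt_two_pow_self (n := k + N + 1))
        have hnpos : 0 < n := Nat.pow_pos (by norm_num)
        exact Nat.mul_lt_mul_of_lt_of_le this le_rfl hnpos
      have h2 : 2 ^ (k + N + 1) * n = 2 ^ (k + N + 1 + (k + N + 1)) := by
        rw [hn, ← pow_add]
      have h3 : k + N + 1 + (k + N + 1) ≤ 2 ^ (k + N + 1) := by
        have := two_mul_le_two_pow (k + N + 1) (by omega)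
        omega
      calc k * n < 2 ^ (k + N + 1 + (k + N + 1)) := h2 ▸ h1
        _ ≤ 2 ^ (2 ^ (k + N + 1)) := Nat.pow_le_pow_right (by norm_num) h3
        _ = 2 ^ n := by rw [hn]
    have hNn : N ≤ 2 ^ n - 1 := by
      have h1 : N < n := by
        have : k + N + 1 < 2 ^ (k + N + 1) := Nat.lt_two_pow_self
        omega
      have h2 : n < 2 ^ n := Nat.lt_two_pow_self
      omega
    -- pick f ∉ σ n
    have hcard : (σ n).card < Fintype.card (Fin (2 ^ n) → Bool) := by
      have : Fintype.card (Fin (2 ^ n) → Bool) = 2 ^ (2 ^ n) := by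
        simp [Fintype.card_fun]
      rw [this]
      exact lt_of_le_of_lt (hσ n) (Nat.pow_lt_pow_right (by norm_num) hkn)
    obtain ⟨f, hf⟩ : ∃ f, f ∉ σ n := by
      by_contra h
      push_neg at h
      have : σ n = Finset.univ := Finset.eq_univ_of_forall h
      rw [this, Finset.card_univ] at hcard
      omega
    set p : ℕ := 2 ^ n - 1 with hp
    set y : ℕ → Bool := fun j => if h : p ≤ j ∧ j - p < 2 ^ n then f ⟨j - p, h.2⟩ else x j
      with hy
    have hymem : y ∈ (I : Set ℕ).pi u := by
      intro i hi
      have hiN : i < N := by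
        have : i ≤ I.sup id := Finset.le_sup (f := id) hi
        omega
      have : y i = x i := by
        rw [hy]
        have : ¬ (p ≤ i ∧ i - p < 2 ^ n) := by
          intro h
          have : N ≤ p := hNn
          omega
        simp [this]
      rw [this]
      exact (hu i hi).2
    have hyB : y ∈ slalomSet σ := interior_subset (hsub hymem)
    have : hRes y n = f := by
      funext i
      have hcond : p ≤ p + (i : ℕ) ∧ p + (i : ℕ) - p < 2 ^ n := by
        constructor
        · omega
        · simp only [Nat.add_sub_cancel_left]; exact i.2
      show y (2 ^ n - 1 + (i : ℕ)) = f i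
      rw [hy]
      simp only [← hp, dif_pos hcond]
      congr 1
      ext
      simp
    exact hf (this ▸ hyB n)
  exact ⟨hclosed, hclosed.isNowhereDense_iff.mpr hint⟩
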